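/- Every (m,w) ∈ 𝓜 satisfies the L¹ bound ‖m‖_{L¹(Q_T)} ≤ T ( ‖m₀‖_{L¹(Ω)} + ‖j‖_{L¹((0,T)×∂Ω, dσ dt)} ). -/
import Mathlib


open MeasureTheory Set
open scoped ENNReal NNReal

noncomputable section

theorem stmt3
    (N : ℕ) (hN : 1 ≤ N)
    (Ω : Set (EuclideanSpace ℝ (Fin N)))
    (hΩopen : IsOpen Ω) (hΩbdd : Bornology.IsBounded Ω)
    (T : ℝ) (hT : 0 < T)
    (m₀ : EuclideanSpace ℝ (Fin N) → ℝ)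
    (hm₀int : IntegrableOn m₀ Ω)
    (hm₀pos : ∀ᵐ x ∂(volume.restrict Ω), 0 ≤ m₀ x)
    (j : ℝ × EuclideanSpace ℝ (Fin N) → ℝ)
    (hjcont : ContinuousOn j (Set.Icc 0 T ×ˢ frontier Ω))
    (hjpos : ∀ p ∈ Set.Icc 0 T ×ˢ frontier Ω, 0 ≤ j p)
    (hjint : IntegrableOn j (Set.Icc 0 T ×ˢ frontier Ω)
      ((volume : Measure ℝ).prod (μH[(N : ℝ) - 1])))
    (m : ℝ × EuclideanSpace ℝ (Fin N) → ℝ)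
    (w : ℝ × EuclideanSpace ℝ (Fin N) → EuclideanSpace ℝ (Fin N))
    (hmint : IntegrableOn m (Set.Icc 0 T ×ˢ Ω))
    (hwint : IntegrableOn w (Set.Icc 0 T ×ˢ Ω))
    (hmpos : ∀ᵐ z ∂(volume.restrict (Set.Icc 0 T ×ˢ Ω)), 0 ≤ m z)
    (hFP : ∀ ξ : ℝ × EuclideanSpace ℝ (Fin N) → ℝ,
      (∃ K : ℝ≥0, LipschitzWith K ξ) →
      (∀ x, ξ (T, x) = 0) →
      (∫ z in Set.Icc 0 T ×ˢ Ω,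
          (m z * fderiv ℝ ξ z (1, 0) + fderiv ℝ ξ z (0, w z)))
        + (∫ x in Ω, ξ (0, x) * m₀ x)
        + (∫ p in Set.Icc 0 T ×ˢ frontier Ω, j p * ξ p
            ∂((volume : Measure ℝ).prod (μH[(N : ℝ) - 1]))) = 0) :
    (∫ z in Set.Icc 0 T ×ˢ Ω, |m z|)
      ≤ T * ((∫ x in Ω, |m₀ x|)
        + (∫ p in Set.Icc 0 T ×ˢ frontier Ω, |j p|
            ∂((volume : Measure ℝ).prod (μH[(N : ℝ) - 1])))) := by
  classical
  set ξ : ℝ × EuclideanSpace ℝ (Fin N) → ℝ := fun z => T - z.1 with hξdef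
  have hξlip : ∃ K : ℝ≥0, LipschitzWith K ξ :=
    ⟨0 + 1, (LipschitzWith.const T).sub LipschitzWith.prod_fst⟩
  have hξ0 : ∀ x : EuclideanSpace ℝ (Fin N), ξ (T, x) = 0 := fun x => by simp [ξ]
  have hfd : ∀ z : ℝ × EuclideanSpace ℝ (Fin N), fderiv ℝ ξ z
      = -(ContinuousLinearMap.fst ℝ ℝ (EuclideanSpace ℝ (Fin N))) := fun z =>
    ((hasFDerivAt_fst (p := z)).const_sub T).fderiv
  have key := hFP ξ hξlip hξ0
  have h1 : (∫ z in Set.Icc 0 T ×ˢ Ω,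
      (m z * fderiv ℝ ξ z (1, 0) + fderiv ℝ ξ z (0, w z)))
      = -∫ z in Set.Icc 0 T ×ˢ Ω, m z := by
    rw [← integral_neg]
    refine integral_congr_ae (Filter.Eventually.of_forall fun z => ?_)
    simp [hfd z, ContinuousLinearMap.neg_apply]
  have h2 : (∫ x in Ω, ξ (0, x) * m₀ x) = T * ∫ x in Ω, m₀ x := by
    simp only [ξ, sub_zero]
    rw [integral_const_mul]
  rw [h1, h2] at key
  -- boundary term estimate
  have hSb : MeasurableSet (Set.Icc (0:ℝ) T ×ˢ frontier Ω) :=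
    measurableSet_Icc.prod isClosed_frontier.measurableSet
  have hmemS : ∀ᵐ p ∂(((volume : Measure ℝ).prod (μH[(N : ℝ) - 1])).restrict
      (Set.Icc (0:ℝ) T ×ˢ frontier Ω)),
      p ∈ Set.Icc (0:ℝ) T ×ˢ frontier Ω := ae_restrict_mem hSb
  have hgint : Integrable (fun p => T * |j p|)
      ((((volume : Measure ℝ).prod (μH[(N : ℝ) - 1]))).restrict
        (Set.Icc (0:ℝ) T ×ˢ frontier Ω)) := hjint.abs.const_mul T
  have hbound : ∀ᵐ p ∂(((volume : Measure ℝ).prod (μH[(N : ℝ) - 1])).restrict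
      (Set.Icc (0:ℝ) T ×ˢ frontier Ω)),
      ‖j p * ξ p‖ ≤ T * |j p| := by
    filter_upwards [hmemS] with p hp
    have hj0 : 0 ≤ j p := hjpos p hp
    have ht : p.1 ∈ Set.Icc (0:ℝ) T := hp.1
    have hξ0' : 0 ≤ ξ p := by simp only [ξ]; linarith [ht.2]
    have hξT : ξ p ≤ T := by simp only [ξ]; linarith [ht.1]
    rw [Real.norm_eq_abs, abs_of_nonneg (mul_nonneg hj0 hξ0'), abs_of_nonneg hj0]
    calc j p * ξ p ≤ j p * T := by nlinarith
      _ = T * j p := mul_comm _ _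
  have hfint : Integrable (fun p => j p * ξ p)
      ((((volume : Measure ℝ).prod (μH[(N : ℝ) - 1]))).restrict
        (Set.Icc (0:ℝ) T ×ˢ frontier Ω)) :=
    hgint.mono' (hjint.aestronglyMeasurable.mul
      ((continuous_const.sub continuous_fst).aestronglyMeasurable)) hbound
  have h3 : (∫ p in Set.Icc 0 T ×ˢ frontier Ω, j p * ξ p
        ∂((volume : Measure ℝ).prod (μH[(N : ℝ) - 1])))
      ≤ T * ∫ p in Set.Icc 0 T ×ˢ frontier Ω, |j p|
        ∂((volume : Measure ℝ).prod (μH[(N : ℝ) - 1])) := by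
    rw [← integral_const_mul]
    exact integral_mono_ae hfint hgint (by
      filter_upwards [hbound] with p hp
      exact le_trans (le_abs_self _) hp)
  -- positivity rewrites
  have habsm : (∫ z in Set.Icc 0 T ×ˢ Ω, |m z|) = ∫ z in Set.Icc 0 T ×ˢ Ω, m z := by
    refine integral_congr_ae ?_
    filter_upwards [hmpos] with z hz
    exact abs_of_nonneg hz
  have habsm₀ : (∫ x in Ω, |m₀ x|) = ∫ x in Ω, m₀ x := by
    refine integral_congr_ae ?_
    filter_upwards [hm₀pos] with x hx
    exact abs_of_nonneg hx
  rw [habsm, habsm₀, mul_add]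
  linarith


end
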